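/- Let n ≥ 1, L > 0, μ ≤ 0, and let f : ℝⁿ → ℝ belong to F_{μ,L}. Assume f⋆ = inf f is finite and that f satisfies the PL inequality with constant μ_p, with 0 < μ_p ≤ L, on the sublevel set X = {x : f(x) ≤ f(x¹)} of a point x¹ ∈ ℝⁿ. Let t₁ ∈ (3/(μ + L + √(μ² − Lμ + L²)), 2/L) and x² = x¹ − t₁∇f(x¹). Then f(x²) − f⋆ ≤ ( (L t₁ − 1)² / ((L t₁ − 1)² + μ_p t₁(2 − L t₁)) ) · (f(x¹) − f⋆). -/

import Mathlib

open Set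
open scoped RealInnerProductSpace

section aux
variable {E : Type*} [NormedAddCommGroup E] [InnerProductSpace ℝ E] [CompleteSpace E]

omit [CompleteSpace E] in
lemma line_convex_aux {φ : E → ℝ} (hφ : ConvexOn ℝ univ φ) (x y : E) {d : ℝ}
    (hd : HasDerivAt (fun s : ℝ => φ (x + s • (y - x))) d 0) : d ≤ φ y - φ x := by
  have h2 : (fun s : ℝ => φ (x + s • (y - x))) = φ ∘ (AffineMap.lineMap x y) := by
    funext s
    simp [AffineMap.lineMap_apply, add_comm]
  have hψ : ConvexOn ℝ univ (fun s : ℝ => φ (x + s • (y - x))) := by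
    rw [h2]
    simpa using hφ.comp_affineMap (AffineMap.lineMap x y)
  have h := hψ.le_slope_of_hasDerivAt (mem_univ (0:ℝ)) (mem_univ (1:ℝ)) one_pos hd
  rw [slope_def_field] at h
  simpa using h

lemma upper_bound {f : E → ℝ} {f' : E → E} {L : ℝ}
    (hgrad : ∀ x, HasGradientAt f (f' x) x)
    (hupper : ConvexOn ℝ univ (fun x => L / 2 * ‖x‖ ^ 2 - f x)) :
    ∀ x y, f y ≤ f x + ⟪f' x, y - x⟫ + L / 2 * ‖y - x‖ ^ 2 := by
  intro x y
  have hline : HasDerivAt (fun s : ℝ => x + s • (y - x)) (y - x) 0 := by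
    simpa using ((hasDerivAt_id (0:ℝ)).smul_const (y - x)).const_add x
  have hfc : HasDerivAt (fun s : ℝ => f (x + s • (y - x))) ⟪f' x, y - x⟫ 0 := by
    have hf := (hasGradientAt_iff_hasFDerivAt.mp (hgrad x))
    have hf2 : HasFDerivAt f ((InnerProductSpace.toDual ℝ E) (f' x)) (x + (0:ℝ) • (y - x)) := by
      simpa using hf
    have := hf2.comp_hasDerivAt (0:ℝ) hline
    simpa [InnerProductSpace.toDual_apply_apply, Function.comp_def] using this
  have hnc : HasDerivAt (fun s : ℝ => L / 2 * ‖x + s • (y - x)‖ ^ 2) (L * ⟪x, y - x⟫) 0 := by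
    have hEq : (fun s : ℝ => L / 2 * ‖x + s • (y - x)‖ ^ 2)
        = (fun s : ℝ => L / 2 * (‖x‖ ^ 2 + 2 * (s * ⟪x, y - x⟫) + s ^ 2 * ‖y - x‖ ^ 2)) := by
      funext s
      have h1 := norm_add_sq_real x (s • (y - x))
      have h2 : ⟪x, s • (y - x)⟫ = s * ⟪x, y - x⟫ := real_inner_smul_right x (y - x) s
      have h3 : ‖s • (y - x)‖ ^ 2 = s ^ 2 * ‖y - x‖ ^ 2 := by
        rw [norm_smul]; rw [mul_pow]; simp [sq_abs]
      rw [h1, h2, h3]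
    rw [hEq]
    have hpoly : HasDerivAt (fun s : ℝ => ‖x‖ ^ 2 + 2 * (s * ⟪x, y - x⟫) + s ^ 2 * ‖y - x‖ ^ 2)
        (2 * ⟪x, y - x⟫) 0 := by
      have h1 : HasDerivAt (fun s : ℝ => 2 * (s * ⟪x, y - x⟫)) (2 * ⟪x, y - x⟫) 0 := by
        simpa using (((hasDerivAt_id (0:ℝ)).mul_const ⟪x, y - x⟫).const_mul 2)
      have h2 : HasDerivAt (fun s : ℝ => s ^ 2 * ‖y - x‖ ^ 2) 0 0 := by
        simpa using ((hasDerivAt_pow 2 (0:ℝ))).mul_const (‖y - x‖ ^ 2)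
      simpa [Pi.add_def] using ((hasDerivAt_const (0:ℝ) (‖x‖^2)).add h1).add h2
    have := hpoly.const_mul (L / 2)
    refine this.congr_deriv ?_
    ring
  have hcomb : HasDerivAt (fun s : ℝ => L / 2 * ‖x + s • (y - x)‖ ^ 2 - f (x + s • (y - x)))
      (L * ⟪x, y - x⟫ - ⟪f' x, y - x⟫) 0 := hnc.sub hfc
  have key := line_convex_aux hupper x y hcomb
  have e1 : L / 2 * ‖y - x‖ ^ 2 = L / 2 * ‖y‖ ^ 2 - L * ⟪y, x⟫ + L / 2 * ‖x‖ ^ 2 := by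
    rw [norm_sub_sq_real]; ring
  have e2 : L * ⟪x, y - x⟫ = L * ⟪y, x⟫ - L * ‖x‖ ^ 2 := by
    rw [inner_sub_right, real_inner_self_eq_norm_sq, real_inner_comm]; ring
  linarith [key, e1, e2]

lemma lower_bound {f : E → ℝ} {f' : E → E} {μ : ℝ}
    (hgrad : ∀ x, HasGradientAt f (f' x) x)
    (hlower : ConvexOn ℝ univ (fun x => f x - μ / 2 * ‖x‖ ^ 2)) :
    ∀ x y, f x + ⟪f' x, y - x⟫ + μ / 2 * ‖y - x‖ ^ 2 ≤ f y := by
  have hgrad' : ∀ x, HasGradientAt (fun z => -f z) (-f' x) x := by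
    intro x
    rw [hasGradientAt_iff_hasFDerivAt]
    have := (hasGradientAt_iff_hasFDerivAt.mp (hgrad x)).neg
    simpa [Pi.neg_def] using this
  have hupper' : ConvexOn ℝ univ (fun x => (-μ) / 2 * ‖x‖ ^ 2 - (fun z => -f z) x) := by
    have hEq : (fun x : E => (-μ) / 2 * ‖x‖ ^ 2 - (fun z => -f z) x)
        = (fun x => f x - μ / 2 * ‖x‖ ^ 2) := by
      funext z; ring
    rw [hEq]; exact hlower
  intro x y
  have := upper_bound hgrad' hupper' x y
  simp only [inner_neg_left] at this
  linarith

end aux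
set_option maxHeartbeats 2000000 in
theorem stmt_2 (n : ℕ) (hn : 1 ≤ n)
    (f : EuclideanSpace ℝ (Fin n) → ℝ)
    (f' : EuclideanSpace ℝ (Fin n) → EuclideanSpace ℝ (Fin n))
    (L μ : ℝ) (hL : 0 < L) (hμ : μ ≤ 0)
    (hgrad : ∀ x, HasGradientAt f (f' x) x)
    (hupper : ConvexOn ℝ univ (fun x => L / 2 * ‖x‖ ^ 2 - f x))
    (hlower : ConvexOn ℝ univ (fun x => f x - μ / 2 * ‖x‖ ^ 2))
    (fstar : ℝ) (hfstar : IsGLB (range f) fstar)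
    (μp : ℝ) (hμp : 0 < μp) (hμpL : μp ≤ L)
    (x1 : EuclideanSpace ℝ (Fin n))
    (hPL : ∀ x, f x ≤ f x1 → f x - fstar ≤ 1 / (2 * μp) * ‖f' x‖ ^ 2)
    (t1 : ℝ)
    (ht1 : t1 ∈ Ioo (3 / (μ + L + Real.sqrt (μ ^ 2 - L * μ + L ^ 2))) (2 / L))
    (x2 : EuclideanSpace ℝ (Fin n)) (hx2 : x2 = x1 - t1 • f' x1) :
    f x2 - fstar ≤
      (L * t1 - 1) ^ 2 / ((L * t1 - 1) ^ 2 + μp * t1 * (2 - L * t1)) *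
        (f x1 - fstar) := by
  obtain ⟨htlo, hthi⟩ := ht1
  have hr0 : (0:ℝ) ≤ μ ^ 2 - L * μ + L ^ 2 := by nlinarith [sq_nonneg (μ - L), sq_nonneg μ, sq_nonneg L]
  set r := Real.sqrt (μ ^ 2 - L * μ + L ^ 2) with hrdef
  have hrsq : r ^ 2 = μ ^ 2 - L * μ + L ^ 2 := Real.sq_sqrt hr0
  have hrpos : 0 ≤ r := Real.sqrt_nonneg _
  have hrm : -μ ≤ r := by nlinarith [hrsq, hrpos, mul_pos hL hL]
  have hd : 0 < μ + L + r := by linarith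
  have ht0 : 0 < t1 := lt_trans (div_pos (by norm_num) hd) htlo
  have htd : 3 < t1 * (μ + L + r) := by
    rw [div_lt_iff₀ hd] at htlo; linarith
  have hLt2 : L * t1 < 2 := by
    rw [lt_div_iff₀ hL] at hthi; linarith
  have hrstrict : 0 < r := by nlinarith [hrsq, hrpos, mul_pos hL hL]
  have he : 0 < 2 * (L + μ) * t1 - L * μ * t1 ^ 2 - 3 := by
    rcases le_or_gt (t1 * (μ + L)) 3 with hcase | hcase
    · have h1 : 0 < t1 * r - (3 - t1 * (μ + L)) := by nlinarith [htd]
      nlinarith [h1, mul_pos ht0 hrstrict, hcase, hrsq]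
    · nlinarith [hcase, mul_nonneg (mul_nonneg hL.le (neg_nonneg.2 hμ)) (sq_nonneg t1)]
  have hLt1 : 1 < L * t1 := by
    nlinarith [he, mul_nonneg (mul_nonneg (neg_nonneg.2 hμ) ht0.le) (by linarith : (0:ℝ) ≤ 2 - L * t1)]
  have hM : 0 < L - μ := by linarith
  have hMne : L - μ ≠ 0 := ne_of_gt hM
  have hU := upper_bound hgrad hupper
  have hLo := lower_bound hgrad hlower
  set g1 := f' x1 with hg1
  set g2 := f' x2 with hg2
  set Gs := ⟪g1, g1⟫ with hGs
  set Hs := ⟪g2, g2⟫ with hHs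
  set Ps := ⟪g1, g2⟫ with hPs
  have hGs0 : 0 ≤ Gs := by rw [hGs]; exact real_inner_self_nonneg
  have hcomm : ⟪g2, g1⟫ = Ps := by rw [hPs]; exact real_inner_comm _ _
  have expg : ∀ a b : ℝ, ⟪g1, a • g1 + b • g2⟫ = a * Gs + b * Ps := by
    intro a b
    simp only [inner_add_right, real_inner_smul_right]
    rfl
  have exph : ∀ a b : ℝ, ⟪g2, a • g1 + b • g2⟫ = a * Ps + b * Hs := by
    intro a b
    simp only [inner_add_right, real_inner_smul_right, hcomm]
    rfl
  have expn : ∀ a b : ℝ, ‖a • g1 + b • g2‖ ^ 2 = a ^ 2 * Gs + 2 * a * b * Ps + b ^ 2 * Hs := by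
    intro a b
    rw [← real_inner_self_eq_norm_sq]
    simp only [inner_add_left, inner_add_right, real_inner_smul_left, real_inner_smul_right, hcomm]
    ring
  set w := (L - μ)⁻¹ with hw
  set c := 1 - μ * t1 with hc
  set zA := x2 + ((w * c) • g1 + (-w) • g2) with hzA
  set zB := x1 + ((-(w * c)) • g1 + w • g2) with hzB
  have dA2 : zA - x2 = (w * c) • g1 + (-w) • g2 := by rw [hzA]; abel
  have dA1 : zA - x1 = (w * c - t1) • g1 + (-w) • g2 := by rw [hzA, hx2]; module
  have dB1 : zB - x1 = (-(w * c)) • g1 + w • g2 := by rw [hzB]; abel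
  have dB2 : zB - x2 = (t1 - w * c) • g1 + w • g2 := by rw [hzB, hx2]; module
  have SA : f x1 + ((w * c - t1) * Gs + (-w) * Ps)
      + μ / 2 * ((w * c - t1) ^ 2 * Gs + 2 * (w * c - t1) * (-w) * Ps + (-w) ^ 2 * Hs)
      ≤ f x2 + ((w * c) * Ps + (-w) * Hs)
      + L / 2 * ((w * c) ^ 2 * Gs + 2 * (w * c) * (-w) * Ps + (-w) ^ 2 * Hs) := by
    have h1 := hLo x1 zA
    have h2 := hU x2 zA
    rw [← hg1] at h1
    rw [← hg2] at h2
    rw [dA1, expg _ _, expn _ _] at h1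
    rw [dA2, exph _ _, expn _ _] at h2
    linarith
  have SB : f x2 + ((t1 - w * c) * Ps + w * Hs)
      + μ / 2 * ((t1 - w * c) ^ 2 * Gs + 2 * (t1 - w * c) * w * Ps + w ^ 2 * Hs)
      ≤ f x1 + ((-(w * c)) * Gs + w * Ps)
      + L / 2 * ((-(w * c)) ^ 2 * Gs + 2 * (-(w * c)) * w * Ps + w ^ 2 * Hs) := by
    have h1 := hLo x2 zB
    have h2 := hU x1 zB
    rw [← hg2] at h1
    rw [← hg1] at h2
    rw [dB2, exph _ _, expn _ _] at h1
    rw [dB1, expg _ _, expn _ _] at h2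
    linarith
  have idA : 2 * (L - μ) ^ 2 * ((f x2 + ((w * c) * Ps + (-w) * Hs)
      + L / 2 * ((w * c) ^ 2 * Gs + 2 * (w * c) * (-w) * Ps + (-w) ^ 2 * Hs))
      - (f x1 + ((w * c - t1) * Gs + (-w) * Ps)
      + μ / 2 * ((w * c - t1) ^ 2 * Gs + 2 * (w * c - t1) * (-w) * Ps + (-w) ^ 2 * Hs)))
      = 2 * (L - μ) ^ 2 * (f x2 - f x1 + t1 * Gs - μ * t1 ^ 2 * Gs / 2)
        - (L - μ) * (Hs - 2 * (1 - μ * t1) * Ps + (1 - μ * t1) ^ 2 * Gs) := by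
    rw [hw, hc]
    field_simp
    ring
  have idB : 2 * (L - μ) ^ 2 * ((f x1 + ((-(w * c)) * Gs + w * Ps)
      + L / 2 * ((-(w * c)) ^ 2 * Gs + 2 * (-(w * c)) * w * Ps + w ^ 2 * Hs))
      - (f x2 + ((t1 - w * c) * Ps + w * Hs)
      + μ / 2 * ((t1 - w * c) ^ 2 * Gs + 2 * (t1 - w * c) * w * Ps + w ^ 2 * Hs)))
      = 2 * (L - μ) ^ 2 * (f x1 - f x2 - t1 * Ps - μ * t1 ^ 2 * Gs / 2)
        - (L - μ) * (Hs - 2 * (1 - μ * t1) * Ps + (1 - μ * t1) ^ 2 * Gs) := by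
    rw [hw, hc]
    field_simp
    ring
  have hA2 : 0 ≤ 2 * (L - μ) ^ 2 * (f x2 - f x1 + t1 * Gs - μ * t1 ^ 2 * Gs / 2)
      - (L - μ) * (Hs - 2 * (1 - μ * t1) * Ps + (1 - μ * t1) ^ 2 * Gs) := by
    rw [← idA]
    exact mul_nonneg (by positivity) (sub_nonneg.mpr SA)
  have hB2 : 0 ≤ 2 * (L - μ) ^ 2 * (f x1 - f x2 - t1 * Ps - μ * t1 ^ 2 * Gs / 2)
      - (L - μ) * (Hs - 2 * (1 - μ * t1) * Ps + (1 - μ * t1) ^ 2 * Gs) := by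
    rw [← idB]
    exact mul_nonneg (by positivity) (sub_nonneg.mpr SB)
  have hdes : f x2 ≤ f x1 := by
    have h2 := hU x1 x2
    rw [← hg1] at h2
    have d : x2 - x1 = (-t1) • g1 + (0:ℝ) • g2 := by rw [hx2]; module
    rw [d, expg _ _, expn _ _] at h2
    linarith only [h2, mul_nonneg (mul_nonneg ht0.le (by linarith : (0:ℝ) ≤ 2 - L * t1)) hGs0]
  have hPL2' : 2 * μp * (f x2 - fstar) ≤ Hs := by
    have h0 := hPL x2 hdes
    rw [← hg2] at h0
    have hHn : Hs = ‖g2‖ ^ 2 := by rw [hHs]; exact real_inner_self_eq_norm_sq g2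
    rw [← hHn] at h0
    have h2m : (0:ℝ) < 2 * μp := by positivity
    calc 2 * μp * (f x2 - fstar) ≤ 2 * μp * (1 / (2 * μp) * Hs) :=
          mul_le_mul_of_nonneg_left h0 h2m.le
      _ = Hs := by field_simp
  have hZ : 0 ≤ (L * t1 - 1) ^ 2 * Gs + 2 * (L * t1 - 1) * 1 * Ps + 1 ^ 2 * Hs := by
    rw [← expn (L * t1 - 1) 1]
    positivity
  have hx0 : 0 ≤ (L * t1 - 1) * (2 - L * t1) :=
    mul_nonneg (by linarith) (by linarith)
  have hκ : 0 ≤ L * t1 - 1 := by linarith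
  have hτ : 0 ≤ t1 * (2 - L * t1) * (L - μ) ^ 2 :=
    mul_nonneg (mul_nonneg ht0.le (by linarith)) (sq_nonneg _)
  have heM : 0 ≤ (2 * (L + μ) * t1 - L * μ * t1 ^ 2 - 3) * (L - μ) := mul_nonneg he.le hM.le
  have key : 0 ≤ 2 * (L - μ) ^ 2 * ((L * t1 - 1) ^ 2 * (f x1 - fstar)
      - ((L * t1 - 1) ^ 2 + μp * t1 * (2 - L * t1)) * (f x2 - fstar)) := by
    linarith only [mul_nonneg hx0 hA2, mul_nonneg hκ hB2, mul_nonneg hτ (sub_nonneg.mpr hPL2'),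
      mul_nonneg heM hZ]
  have key2 : 0 ≤ (L * t1 - 1) ^ 2 * (f x1 - fstar)
      - ((L * t1 - 1) ^ 2 + μp * t1 * (2 - L * t1)) * (f x2 - fstar) := by
    have h2 : (0:ℝ) < 2 * (L - μ) ^ 2 := by have h3 : (0:ℝ) < (L - μ) ^ 2 := pow_pos hM 2; linarith only [h3]
    exact (mul_nonneg_iff_of_pos_left h2).mp key
  have hden : 0 < (L * t1 - 1) ^ 2 + μp * t1 * (2 - L * t1) := by
    have h1 : 0 < (L * t1 - 1) ^ 2 := pow_pos (by linarith) 2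
    have h2 : 0 < μp * t1 * (2 - L * t1) :=
      mul_pos (mul_pos hμp ht0) (by linarith)
    linarith
  rw [div_mul_eq_mul_div, le_div_iff₀ hden]
  linarith only [key2]
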